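/- For n divisible by 4 one has T(n) ⊆ U(n), and with n = 4m the quantity α_n := 1 − |T(n)|/|U(n)| is o(1/n): the sequence 4m · (1 − |T(4m)|/|U(4m)|) tends to 0 as m → ∞. -/

import Mathlib

/-- A strict partial order on a type, identified with its set of ordered pairs:
an irreflexive transitive binary relation. -/
def IsSPO {α : Type*} (P : Set (α × α)) : Prop :=
  (∀ x : α, (x, x) ∉ P) ∧ ∀ x y z : α, (x, y) ∈ P → (y, z) ∈ P → (x, z) ∈ P

/-- `Px = {z : z P x}`, the strict down-set of `x`. -/
def dSet {α : Type*} (P : Set (α × α)) (x : α) : Set α := {z | (z, x) ∈ P}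

/-- `xP = {z : x P z}`, the strict up-set of `x`. -/
def uSet {α : Type*} (P : Set (α × α)) (x : α) : Set α := {z | (x, z) ∈ P}

/-- `(A,B,C) ∈ L(n)`: an ordered partition of `{0,…,n-1}` with
`|A| = |C| = n/4` and `|B| = n/2`. -/
def LPart (n : ℕ) (A B C : Finset (Fin n)) : Prop :=
  Disjoint A B ∧ Disjoint A C ∧ Disjoint B C ∧ A ∪ B ∪ C = Finset.univ ∧
    A.card = n / 4 ∧ C.card = n / 4 ∧ B.card = n / 2

/-- `P ∈ T_{ABC}(n)`: a strict partial order such that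
(i) for distinct `x,y` in the same level, `Px ⊈ Py` or `yP ⊈ xP`, and
(ii) for all `(a,b,c) ∈ A×B×C`: `aP ∩ B ∩ Pc ≠ ∅`, `A ∩ Pb ≠ ∅` and `bP ∩ C ≠ ∅`. -/
def TABC (n : ℕ) (A B C : Finset (Fin n)) (P : Set (Fin n × Fin n)) : Prop :=
  IsSPO P ∧
    (∀ x y : Fin n,
      ((x ∈ A ∧ y ∈ A) ∨ (x ∈ B ∧ y ∈ B) ∨ (x ∈ C ∧ y ∈ C)) → x ≠ y →
        ¬ dSet P x ⊆ dSet P y ∨ ¬ uSet P y ⊆ uSet P x) ∧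
    (∀ a ∈ A, ∀ b ∈ B, ∀ c ∈ C,
      (uSet P a ∩ ↑B ∩ dSet P c).Nonempty ∧ (↑A ∩ dSet P b).Nonempty ∧
        (uSet P b ∩ ↑C).Nonempty)

/-- The covering relation `P^∨ = P \ P²` of `P`. -/
def covRel {α : Type*} (P : Set (α × α)) : Set (α × α) :=
  {p | p ∈ P ∧ ¬ ∃ z : α, (p.1, z) ∈ P ∧ (z, p.2) ∈ P}

/-- `P ∈ U_{ABC}(n)`: a strict partial order on `{0,…,n-1}` whose covering
relation satisfies `P^∨ ⊆ (A×B) ∪ (B×C)`. -/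
def UABC (n : ℕ) (A B C : Finset (Fin n)) (P : Set (Fin n × Fin n)) : Prop :=
  IsSPO P ∧ covRel P ⊆ (↑A ×ˢ ↑B) ∪ (↑B ×ˢ ↑C)

/-- `T(n) = ∪_{(A,B,C) ∈ L(n)} T_{ABC}(n)`. -/
def Tset (n : ℕ) : Set (Set (Fin n × Fin n)) :=
  {P | ∃ A B C : Finset (Fin n), LPart n A B C ∧ TABC n A B C P}

/-- `U(n) = ∪_{(A,B,C) ∈ L(n)} U_{ABC}(n)`. -/
def Uset (n : ℕ) : Set (Set (Fin n × Fin n)) :=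
  {P | ∃ A B C : Finset (Fin n), LPart n A B C ∧ UABC n A B C P}

open Finset
open scoped Classical
set_option linter.unusedSectionVars false

section Core

variable {n : ℕ} {A B C : Finset (Fin n)} {P : Set (Fin n × Fin n)}

/-- no relations within a level -/
lemma no_level (hT : TABC n A B C P) {x y : Fin n}
    (hxy : (x ∈ A ∧ y ∈ A) ∨ (x ∈ B ∧ y ∈ B) ∨ (x ∈ C ∧ y ∈ C))
    (hP : (x, y) ∈ P) : False := by
  obtain ⟨hspo, hi, -⟩ := hT
  have hne : x ≠ y := by rintro rfl; exact hspo.1 x hP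
  rcases hi x y hxy hne with h | h
  · exact h fun z hz => hspo.2 z x y hz hP
  · exact h fun z hz => hspo.2 x y z hP hz

lemma TABC_sub_UABC (hUn : A ∪ B ∪ C = Finset.univ)
    (hA : A.Nonempty) (hB : B.Nonempty) (hC : C.Nonempty)
    (hT : TABC n A B C P) : UABC n A B C P := by
  obtain ⟨hspo, hi, hii⟩ := hT
  have hBA : ∀ b ∈ B, ∀ a ∈ A, (b, a) ∈ P → False := by
    intro b hb a ha hP'
    obtain ⟨c, hc⟩ := hC
    obtain ⟨a', ha'⟩ := (hii a ha b hb c hc).2.1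
    exact no_level ⟨hspo, hi, hii⟩ (Or.inl ⟨by exact_mod_cast ha'.1, ha⟩)
      (hspo.2 a' b a ha'.2 hP')
  have hCB : ∀ c ∈ C, ∀ b ∈ B, (c, b) ∈ P → False := by
    intro c hc b hb hP'
    obtain ⟨a, ha⟩ := hA
    obtain ⟨c', hc'⟩ := (hii a ha b hb c hc).2.2
    exact no_level ⟨hspo, hi, hii⟩ (Or.inr (Or.inr ⟨hc, by exact_mod_cast hc'.2⟩))
      (hspo.2 c b c' hP' hc'.1)
  have hCA : ∀ c ∈ C, ∀ a ∈ A, (c, a) ∈ P → False := by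
    intro c hc a ha hP'
    obtain ⟨b, hb⟩ := hB
    obtain ⟨b', hb'⟩ := (hii a ha b hb c hc).1
    exact hspo.1 a (hspo.2 a b' a hb'.1.1 (hspo.2 b' c a hb'.2 hP'))
  refine ⟨hspo, ?_⟩
  rintro ⟨x, y⟩ ⟨hP', hnc⟩
  have hx : x ∈ A ∪ B ∪ C := hUn ▸ Finset.mem_univ x
  have hy : y ∈ A ∪ B ∪ C := hUn ▸ Finset.mem_univ y
  rw [Finset.mem_union, Finset.mem_union] at hx hy
  rw [or_assoc] at hx hy
  have hTall : TABC n A B C P := ⟨hspo, hi, hii⟩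
  rcases hx with hx | hx | hx
  · rcases hy with hy | hy | hy
    · exact absurd hP' fun h => no_level hTall (Or.inl ⟨hx, hy⟩) h
    · exact Or.inl ⟨by exact_mod_cast hx, by exact_mod_cast hy⟩
    · obtain ⟨b, hb⟩ := hB
      obtain ⟨b', hb'⟩ := (hii x hx b hb y hy).1
      exact absurd ⟨b', hb'.1.1, hb'.2⟩ hnc
  · rcases hy with hy | hy | hy
    · exact absurd hP' fun h => hBA x hx y hy h
    · exact absurd hP' fun h => no_level hTall (Or.inr (Or.inl ⟨hx, hy⟩)) h
    · exact Or.inr ⟨by exact_mod_cast hx, by exact_mod_cast hy⟩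
  · rcases hy with hy | hy | hy
    · exact absurd hP' fun h => hCA x hx y hy h
    · exact absurd hP' fun h => hCB x hx y hy h
    · exact absurd hP' fun h => no_level hTall (Or.inr (Or.inr ⟨hx, hy⟩)) h

end Core

section Rep

variable {n : ℕ} {A B C : Finset (Fin n)} {P : Set (Fin n × Fin n)}

lemma spo_step_aux (hP : IsSPO P) :
    ∀ N (x y : Fin n), (x, y) ∈ P →
      (Finset.univ.filter (fun z => (x, z) ∈ P ∧ (z, y) ∈ P)).card ≤ N →
      ∃ z, (x, z) ∈ covRel P ∧ (z = y ∨ (z, y) ∈ P) := by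
  intro N
  induction N with
  | zero =>
    intro x y hxy hcard
    refine ⟨y, ⟨hxy, ?_⟩, Or.inl rfl⟩
    rintro ⟨z, hz1, hz2⟩
    have hz : z ∈ Finset.univ.filter (fun z => (x, z) ∈ P ∧ (z, y) ∈ P) := by
      simp [hz1, hz2]
    rw [Finset.card_eq_zero.mp (Nat.le_zero.mp hcard)] at hz
    exact absurd hz (Finset.notMem_empty z)
  | succ N ih =>
    intro x y hxy hcard
    by_cases hS : (Finset.univ.filter (fun z => (x, z) ∈ P ∧ (z, y) ∈ P)).Nonempty
    · obtain ⟨z, hz⟩ := hS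
      rw [Finset.mem_filter] at hz
      obtain ⟨-, hxz, hzy⟩ := hz
      have hsub : (Finset.univ.filter (fun w => (x, w) ∈ P ∧ (w, z) ∈ P)) ⊆
          (Finset.univ.filter (fun w => (x, w) ∈ P ∧ (w, y) ∈ P)).erase z := by
        intro w hw
        rw [Finset.mem_filter] at hw
        refine Finset.mem_erase.mpr ⟨?_, ?_⟩
        · rintro rfl; exact hP.1 _ hw.2.2
        · simp only [Finset.mem_filter]
          exact ⟨Finset.mem_univ w, hw.2.1, hP.2 w z y hw.2.2 hzy⟩
      have hcard' : (Finset.univ.filter (fun w => (x, w) ∈ P ∧ (w, z) ∈ P)).card ≤ N := by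
        calc _ ≤ ((Finset.univ.filter (fun w => (x, w) ∈ P ∧ (w, y) ∈ P)).erase z).card :=
              Finset.card_le_card hsub
          _ ≤ N := by
            have hzmem : z ∈ Finset.univ.filter (fun w => (x, w) ∈ P ∧ (w, y) ∈ P) := by
              simp [hxz, hzy]
            rw [Finset.card_erase_of_mem hzmem]
            omega
      obtain ⟨z', hz', hz'2⟩ := ih x z hxz hcard'
      refine ⟨z', hz', Or.inr ?_⟩
      rcases hz'2 with rfl | h
      · exact hzy
      · exact hP.2 z' z y h hzy
    · refine ⟨y, ⟨hxy, ?_⟩, Or.inl rfl⟩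
      rintro ⟨z, hz1, hz2⟩
      exact hS ⟨z, by simp [hz1, hz2]⟩

lemma spo_step (hP : IsSPO P) {x y : Fin n} (h : (x, y) ∈ P) :
    ∃ z, (x, z) ∈ covRel P ∧ (z = y ∨ (z, y) ∈ P) :=
  spo_step_aux hP _ x y h le_rfl

/-- the set of potential edges -/
def Etot (A B C : Finset (Fin n)) : Finset (Fin n × Fin n) := A ×ˢ B ∪ B ×ˢ C

/-- the order generated by a set of edges -/
def toP (R : Finset (Fin n × Fin n)) : Set (Fin n × Fin n) :=
  ↑R ∪ {p | ∃ b, (p.1, b) ∈ R ∧ (b, p.2) ∈ R}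

lemma mem_Etot {p : Fin n × Fin n} :
    p ∈ Etot A B C ↔ (p.1 ∈ A ∧ p.2 ∈ B) ∨ (p.1 ∈ B ∧ p.2 ∈ C) := by
  simp [Etot, Finset.mem_union, Finset.mem_product]

variable (hAB : Disjoint A B) (hAC : Disjoint A C) (hBC : Disjoint B C)

section Disj
include hAB hAC hBC

lemma comp_mem {R : Finset (Fin n × Fin n)} (hR : R ⊆ Etot A B C) {x y : Fin n}
    (h : ∃ b, (x, b) ∈ R ∧ (b, y) ∈ R) : x ∈ A ∧ y ∈ C ∧ ∃ b ∈ B, (x, b) ∈ R ∧ (b, y) ∈ R := by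
  obtain ⟨b, h1, h2⟩ := h
  rcases mem_Etot.mp (hR h1) with ⟨hx, hb⟩ | ⟨hx, hb⟩
  · rcases mem_Etot.mp (hR h2) with ⟨hb', hy⟩ | ⟨hb', hy⟩
    · exact absurd hb (Finset.disjoint_left.mp hAB hb')
    · exact ⟨hx, hy, b, hb, h1, h2⟩
  · rcases mem_Etot.mp (hR h2) with ⟨hb', hy⟩ | ⟨hb', hy⟩
    · exact absurd hb (Finset.disjoint_left.mp hAC hb')
    · exact absurd hb (Finset.disjoint_left.mp hBC hb')

lemma toP_mem {R : Finset (Fin n × Fin n)} (hR : R ⊆ Etot A B C) {x y : Fin n}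
    (h : (x, y) ∈ toP R) :
    (x ∈ A ∧ y ∈ B ∧ (x, y) ∈ R) ∨ (x ∈ B ∧ y ∈ C ∧ (x, y) ∈ R) ∨
      (x ∈ A ∧ y ∈ C ∧ ∃ b ∈ B, (x, b) ∈ R ∧ (b, y) ∈ R) := by
  rcases h with h | h
  · rcases mem_Etot.mp (hR h) with ⟨hx, hy⟩ | ⟨hx, hy⟩
    · exact Or.inl ⟨hx, hy, h⟩
    · exact Or.inr (Or.inl ⟨hx, hy, h⟩)
  · obtain ⟨hx, hy, hb⟩ := comp_mem hAB hAC hBC hR h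
    exact Or.inr (Or.inr ⟨hx, hy, hb⟩)

lemma toP_spo {R : Finset (Fin n × Fin n)} (hR : R ⊆ Etot A B C) : IsSPO (toP R) := by
  constructor
  · intro x hx
    rcases toP_mem hAB hAC hBC hR hx with ⟨h1, h2, -⟩ | ⟨h1, h2, -⟩ | ⟨h1, h2, -⟩
    · exact Finset.disjoint_left.mp hAB h1 h2
    · exact Finset.disjoint_left.mp hBC h1 h2
    · exact Finset.disjoint_left.mp hAC h1 h2
  · intro x y z hxy hyz
    rcases toP_mem hAB hAC hBC hR hxy with ⟨h1, h2, hr⟩ | ⟨h1, h2, hr⟩ | ⟨h1, h2, -⟩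
    · rcases toP_mem hAB hAC hBC hR hyz with ⟨h1', h2', hr'⟩ | ⟨h1', h2', hr'⟩ | ⟨h1', h2', -⟩
      · exact absurd h2 (Finset.disjoint_left.mp hAB h1')
      · exact Or.inr ⟨y, hr, hr'⟩
      · exact absurd h2 (Finset.disjoint_left.mp hAB h1')
    · rcases toP_mem hAB hAC hBC hR hyz with ⟨h1', h2', hr'⟩ | ⟨h1', h2', hr'⟩ | ⟨h1', h2', -⟩
      · exact absurd h2 (Finset.disjoint_left.mp hAC h1')
      · exact absurd h2 (Finset.disjoint_left.mp hBC h1')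
      · exact absurd h2 (Finset.disjoint_left.mp hAC h1')
    · rcases toP_mem hAB hAC hBC hR hyz with ⟨h1', h2', hr'⟩ | ⟨h1', h2', hr'⟩ | ⟨h1', h2', -⟩
      · exact absurd h2 (Finset.disjoint_left.mp hAC h1')
      · exact absurd h2 (Finset.disjoint_left.mp hBC h1')
      · exact absurd h2 (Finset.disjoint_left.mp hAC h1')

lemma covRel_toP_sub {R : Finset (Fin n × Fin n)} (hR : R ⊆ Etot A B C) :
    covRel (toP R) ⊆ ↑R := by
  rintro ⟨x, y⟩ ⟨hmem, hnc⟩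
  rcases hmem with h | h
  · exact h
  · obtain ⟨-, -, b, -, h1, h2⟩ := comp_mem hAB hAC hBC hR h
    exact absurd ⟨b, Or.inl h1, Or.inl h2⟩ hnc

lemma toP_UABC {R : Finset (Fin n × Fin n)} (hR : R ⊆ Etot A B C) :
    UABC n A B C (toP R) := by
  refine ⟨toP_spo hAB hAC hBC hR, ?_⟩
  intro p hp
  have := hR (covRel_toP_sub hAB hAC hBC hR hp)
  rcases mem_Etot.mp this with ⟨h1, h2⟩ | ⟨h1, h2⟩
  · exact Or.inl ⟨by exact_mod_cast h1, by exact_mod_cast h2⟩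
  · exact Or.inr ⟨by exact_mod_cast h1, by exact_mod_cast h2⟩

lemma toP_inter {R : Finset (Fin n × Fin n)} (hR : R ⊆ Etot A B C) :
    toP R ∩ ↑(Etot A B C) = ↑R := by
  ext ⟨x, y⟩
  constructor
  · rintro ⟨h1, h2⟩
    rcases toP_mem hAB hAC hBC hR h1 with ⟨-, -, h⟩ | ⟨-, -, h⟩ | ⟨hx, hy, -⟩
    · exact h
    · exact h
    · have h2' : (x, y) ∈ Etot A B C := by exact_mod_cast h2
      rcases mem_Etot.mp h2' with ⟨-, hy'⟩ | ⟨hx', -⟩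
      · exact absurd hy' (Finset.disjoint_right.mp hBC hy)
      · exact absurd hx' (Finset.disjoint_left.mp hAB hx)
  · intro h
    have h' : (x, y) ∈ R := by exact_mod_cast h
    exact ⟨Or.inl h', by exact_mod_cast hR h'⟩

lemma toP_injOn {R₁ R₂ : Finset (Fin n × Fin n)} (h1 : R₁ ⊆ Etot A B C)
    (h2 : R₂ ⊆ Etot A B C) (h : toP R₁ = toP R₂) : R₁ = R₂ := by
  have := toP_inter hAB hAC hBC h1
  rw [h, toP_inter hAB hAC hBC h2] at this
  exact_mod_cast this.symm

lemma UABC_rep (hU : UABC n A B C P) :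
    ∃ R ∈ (Etot A B C).powerset, toP R = P := by
  obtain ⟨hspo, hcov⟩ := hU
  set R : Finset (Fin n × Fin n) := (Etot A B C).filter (fun p => p ∈ covRel P) with hRdef
  have hRsub : R ⊆ Etot A B C := Finset.filter_subset _ _
  have hRmem : ∀ p : Fin n × Fin n, p ∈ R ↔ p ∈ covRel P := by
    intro p
    rw [hRdef, Finset.mem_filter]
    constructor
    · exact fun h => h.2
    · intro h
      refine ⟨?_, h⟩
      rcases hcov h with ⟨ha, hb⟩ | ⟨ha, hb⟩
      · exact mem_Etot.mpr (Or.inl ⟨by exact_mod_cast ha, by exact_mod_cast hb⟩)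
      · exact mem_Etot.mpr (Or.inr ⟨by exact_mod_cast ha, by exact_mod_cast hb⟩)
  refine ⟨R, Finset.mem_powerset.mpr hRsub, ?_⟩
  apply Set.Subset.antisymm
  · rintro ⟨x, y⟩ h
    rcases h with h | h
    · exact ((hRmem _).mp h).1
    · obtain ⟨b, h1, h2⟩ := h
      exact hspo.2 x b y ((hRmem _).mp h1).1 ((hRmem _).mp h2).1
  · rintro ⟨x, y⟩ h
    obtain ⟨z, hz, hz2⟩ := spo_step hspo h
    have hzR : (x, z) ∈ R := (hRmem _).mpr hz
    have hzE := mem_Etot.mp (hRsub hzR)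
    rcases hz2 with rfl | hzy
    · exact Or.inl hzR
    · -- z is strictly between x and y
      rcases hzE with ⟨hx, hzB⟩ | ⟨hx, hzC⟩
      · -- x ∈ A, z ∈ B
        obtain ⟨w, hw, hw2⟩ := spo_step hspo hzy
        have hwR : (z, w) ∈ R := (hRmem _).mpr hw
        have hwE := mem_Etot.mp (hRsub hwR)
        rcases hwE with ⟨hzA, -⟩ | ⟨-, hwC⟩
        · exact absurd hzB (Finset.disjoint_left.mp hAB hzA)
        · rcases hw2 with rfl | hwy
          · exact Or.inr ⟨z, hzR, hwR⟩
          · obtain ⟨v, hv, -⟩ := spo_step hspo hwy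
            have hvR : (w, v) ∈ R := (hRmem _).mpr hv
            rcases mem_Etot.mp (hRsub hvR) with ⟨hwA, -⟩ | ⟨hwB, -⟩
            · exact absurd hwC (Finset.disjoint_left.mp hAC hwA)
            · exact absurd hwC (Finset.disjoint_left.mp hBC hwB)
      · -- z ∈ C: impossible since z has something above
        obtain ⟨w, hw, -⟩ := spo_step hspo hzy
        have hwR : (z, w) ∈ R := (hRmem _).mpr hw
        rcases mem_Etot.mp (hRsub hwR) with ⟨hzA, -⟩ | ⟨hzB, -⟩
        · exact absurd hzC (Finset.disjoint_left.mp hAC hzA)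
        · exact absurd hzC (Finset.disjoint_left.mp hBC hzB)

end Disj
end Rep

section Unique

variable {n : ℕ} {A B C A' B' C' : Finset (Fin n)} {P : Set (Fin n × Fin n)}

lemma part_unique (hL : LPart n A B C) (hL' : LPart n A' B' C')
    (hA : A.Nonempty) (hB : B.Nonempty) (hC : C.Nonempty)
    (hT : TABC n A B C P) (hU' : UABC n A' B' C' P) :
    A = A' ∧ B = B' ∧ C = C' := by
  obtain ⟨hAB', hAC', hBC', hUn', hcA', hcC', hcB'⟩ := hL'
  obtain ⟨R, hRmem, hRP⟩ := UABC_rep hAB' hAC' hBC' hU'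
  rw [Finset.mem_powerset] at hRmem
  have hclass : ∀ x y z : Fin n, (x, y) ∈ P → (y, z) ∈ P →
      x ∈ A' ∧ y ∈ B' ∧ z ∈ C' := by
    intro x y z h1 h2
    rw [← hRP] at h1 h2
    rcases toP_mem hAB' hAC' hBC' hRmem h1 with ⟨hx, hy, -⟩ | ⟨hx, hy, -⟩ | ⟨hx, hy, -⟩ <;>
      rcases toP_mem hAB' hAC' hBC' hRmem h2 with ⟨hy', hz, -⟩ | ⟨hy', hz, -⟩ | ⟨hy', hz, -⟩
    · exact absurd hy (Finset.disjoint_left.mp hAB' hy')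
    · exact ⟨hx, hy, hz⟩
    · exact absurd hy (Finset.disjoint_left.mp hAB' hy')
    · exact absurd hy (Finset.disjoint_left.mp hAC' hy')
    · exact absurd hy (Finset.disjoint_left.mp hBC' hy')
    · exact absurd hy (Finset.disjoint_left.mp hAC' hy')
    · exact absurd hy (Finset.disjoint_left.mp hAC' hy')
    · exact absurd hy (Finset.disjoint_left.mp hBC' hy')
    · exact absurd hy (Finset.disjoint_left.mp hAC' hy')
  obtain ⟨-, -, hii⟩ := hT
  obtain ⟨b0, hb0⟩ := hB
  obtain ⟨c0, hc0⟩ := hC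
  obtain ⟨a0, ha0⟩ := hA
  have hAsub : A ⊆ A' := by
    intro a ha
    obtain ⟨b', hb'⟩ := (hii a ha b0 hb0 c0 hc0).1
    exact (hclass a b' c0 hb'.1.1 hb'.2).1
  have hCsub : C ⊆ C' := by
    intro c hc
    obtain ⟨b', hb'⟩ := (hii a0 ha0 b0 hb0 c hc).1
    exact (hclass a0 b' c hb'.1.1 hb'.2).2.2
  have hBsub : B ⊆ B' := by
    intro b hb
    obtain ⟨a', ha'⟩ := (hii a0 ha0 b hb c0 hc0).2.1
    obtain ⟨c', hc'⟩ := (hii a0 ha0 b hb c0 hc0).2.2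
    exact (hclass a' b c' ha'.2 hc'.1).2.1
  obtain ⟨-, -, -, -, hcA, hcC, hcB⟩ := hL
  exact ⟨Finset.eq_of_subset_of_card_le hAsub (by omega),
    Finset.eq_of_subset_of_card_le hBsub (by omega),
    Finset.eq_of_subset_of_card_le hCsub (by omega)⟩

end Unique

section Counting

variable {γ δ : Type*} [DecidableEq γ] [DecidableEq δ]

lemma split_le (E F : Finset γ) (Q : Finset γ → Prop) [DecidablePred Q]
    (h : ∀ R, R ⊆ E → Q R → Q (R ∩ F)) :
    (E.powerset.filter (fun R => Q R)).card ≤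
      (F.powerset.filter (fun R => Q R)).card * 2 ^ ((E \ F).card) := by
  have key := Finset.card_le_card_of_injOn
    (f := fun R => (R ∩ F, R \ F))
    (s := E.powerset.filter fun R => Q R)
    (t := (F.powerset.filter fun R => Q R) ×ˢ (E \ F).powerset)
    ?_ ?_
  · simpa [Finset.card_product, Finset.card_powerset] using key
  · intro R hR
    rw [Finset.mem_coe, Finset.mem_filter, Finset.mem_powerset] at hR
    rw [Finset.mem_coe, Finset.mem_product, Finset.mem_filter, Finset.mem_powerset, Finset.mem_powerset]
    exact ⟨⟨Finset.inter_subset_right, h R hR.1 hR.2⟩,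
      Finset.sdiff_subset_sdiff hR.1 le_rfl⟩
  · intro R1 h1 R2 h2 heq
    have e1 : R1 ∩ F = R2 ∩ F := congrArg Prod.fst heq
    have e2 : R1 \ F = R2 \ F := congrArg Prod.snd heq
    ext p
    by_cases hpF : p ∈ F
    · constructor
      · intro hp
        have h' : p ∈ R1 ∩ F := Finset.mem_inter.mpr ⟨hp, hpF⟩
        rw [e1] at h'
        exact (Finset.mem_inter.mp h').1
      · intro hp
        have h' : p ∈ R2 ∩ F := Finset.mem_inter.mpr ⟨hp, hpF⟩
        rw [← e1] at h'
        exact (Finset.mem_inter.mp h').1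
    · constructor
      · intro hp
        have h' : p ∈ R1 \ F := Finset.mem_sdiff.mpr ⟨hp, hpF⟩
        rw [e2] at h'
        exact (Finset.mem_sdiff.mp h').1
      · intro hp
        have h' : p ∈ R2 \ F := Finset.mem_sdiff.mpr ⟨hp, hpF⟩
        rw [← e2] at h'
        exact (Finset.mem_sdiff.mp h').1

lemma sum_pow_card (B : Finset δ) : ∑ S ∈ B.powerset, 2 ^ S.card = 3 ^ B.card := by
  have h := Finset.prod_add (fun _ : δ => 2) (fun _ : δ => 1) B
  simp only [Finset.prod_const, one_pow, mul_one] at h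
  rw [show (2 + 1 : ℕ) = 3 from rfl] at h
  exact h.symm

lemma sum_pow_card' (B : Finset δ) : ∑ S ∈ B.powerset, 2 ^ (B \ S).card = 3 ^ B.card := by
  have h := Finset.prod_add (fun _ : δ => 1) (fun _ : δ => 2) B
  simp only [Finset.prod_const, one_pow, one_mul] at h
  rw [show (1 + 2 : ℕ) = 3 from rfl] at h
  exact h.symm

/-- counting subsets of `F` where the `v`-fiber is contained in the `u`-fiber -/
lemma card_row_le (F : Finset γ) (B : Finset δ) (u v : δ → γ) (Q : Finset γ → Prop)
    [DecidablePred Q] (hQ : ∀ R, Q R → ∀ b ∈ B, v b ∈ R → u b ∈ R)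
    (hF : ∀ p ∈ F, (∃ b ∈ B, p = u b) ∨ (∃ b ∈ B, p = v b)) :
    (F.powerset.filter Q).card ≤ 3 ^ B.card := by
  refine le_trans (Finset.card_le_card_of_injOn
    (t := B.powerset.sigma fun S => S.powerset)
    (fun R => (⟨B.filter (fun b => u b ∈ R), B.filter (fun b => v b ∈ R)⟩ :
      Σ _ : Finset δ, Finset δ)) ?_ ?_) ?_
  · intro R hR
    rw [Finset.mem_coe, Finset.mem_filter, Finset.mem_powerset] at hR
    rw [Finset.mem_coe, Finset.mem_sigma, Finset.mem_powerset, Finset.mem_powerset]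
    refine ⟨Finset.filter_subset _ _, ?_⟩
    intro b hb
    rw [Finset.mem_filter] at hb ⊢
    exact ⟨hb.1, hQ R hR.2 b hb.1 hb.2⟩
  · intro R1 h1 R2 h2 heq
    rw [Finset.mem_coe, Finset.mem_filter, Finset.mem_powerset] at h1 h2
    have e1 : B.filter (fun b => u b ∈ R1) = B.filter (fun b => u b ∈ R2) :=
      congrArg Sigma.fst heq
    have e2 : B.filter (fun b => v b ∈ R1) = B.filter (fun b => v b ∈ R2) := by
      have := congrArg Sigma.snd heq
      simpa using this
    have main : ∀ (S T : Finset γ), S ⊆ F → T ⊆ F →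
        B.filter (fun b => u b ∈ S) = B.filter (fun b => u b ∈ T) →
        B.filter (fun b => v b ∈ S) = B.filter (fun b => v b ∈ T) →
        S ⊆ T := by
      intro S T hS hT eu ev p hp
      rcases hF p (hS hp) with ⟨b, hb, rfl⟩ | ⟨b, hb, rfl⟩
      · have : b ∈ B.filter (fun b => u b ∈ S) := Finset.mem_filter.mpr ⟨hb, hp⟩
        rw [eu] at this
        exact (Finset.mem_filter.mp this).2
      · have : b ∈ B.filter (fun b => v b ∈ S) := Finset.mem_filter.mpr ⟨hb, hp⟩
        rw [ev] at this
        exact (Finset.mem_filter.mp this).2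
    exact Finset.Subset.antisymm (main R1 R2 h1.1 h2.1 e1 e2)
      (main R2 R1 h2.1 h1.1 e1.symm e2.symm)
  · rw [Finset.card_sigma]
    simp only [Finset.card_powerset]
    exact le_of_eq (sum_pow_card B)

/-- counting subsets of `F` where the `u`-fiber and `v`-fiber are disjoint -/
lemma card_disj_le (F : Finset γ) (B : Finset δ) (u v : δ → γ) (Q : Finset γ → Prop)
    [DecidablePred Q] (hQ : ∀ R, Q R → ∀ b ∈ B, ¬(u b ∈ R ∧ v b ∈ R))
    (hF : ∀ p ∈ F, (∃ b ∈ B, p = u b) ∨ (∃ b ∈ B, p = v b)) :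
    (F.powerset.filter Q).card ≤ 3 ^ B.card := by
  refine le_trans (Finset.card_le_card_of_injOn
    (t := B.powerset.sigma fun S => (B \ S).powerset)
    (fun R => (⟨B.filter (fun b => u b ∈ R), B.filter (fun b => v b ∈ R)⟩ :
      Σ _ : Finset δ, Finset δ)) ?_ ?_) ?_
  · intro R hR
    rw [Finset.mem_coe, Finset.mem_filter, Finset.mem_powerset] at hR
    rw [Finset.mem_coe, Finset.mem_sigma, Finset.mem_powerset, Finset.mem_powerset]
    refine ⟨Finset.filter_subset _ _, ?_⟩
    intro b hb
    rw [Finset.mem_filter] at hb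
    rw [Finset.mem_sdiff, Finset.mem_filter]
    exact ⟨hb.1, fun hmem => hQ R hR.2 b hb.1 ⟨hmem.2, hb.2⟩⟩
  · intro R1 h1 R2 h2 heq
    rw [Finset.mem_coe, Finset.mem_filter, Finset.mem_powerset] at h1 h2
    have e1 : B.filter (fun b => u b ∈ R1) = B.filter (fun b => u b ∈ R2) :=
      congrArg Sigma.fst heq
    have e2 : B.filter (fun b => v b ∈ R1) = B.filter (fun b => v b ∈ R2) := by
      have := congrArg Sigma.snd heq
      simpa using this
    have main : ∀ (S T : Finset γ), S ⊆ F → T ⊆ F →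
        B.filter (fun b => u b ∈ S) = B.filter (fun b => u b ∈ T) →
        B.filter (fun b => v b ∈ S) = B.filter (fun b => v b ∈ T) →
        S ⊆ T := by
      intro S T hS hT eu ev p hp
      rcases hF p (hS hp) with ⟨b, hb, rfl⟩ | ⟨b, hb, rfl⟩
      · have : b ∈ B.filter (fun b => u b ∈ S) := Finset.mem_filter.mpr ⟨hb, hp⟩
        rw [eu] at this
        exact (Finset.mem_filter.mp this).2
      · have : b ∈ B.filter (fun b => v b ∈ S) := Finset.mem_filter.mpr ⟨hb, hp⟩
        rw [ev] at this
        exact (Finset.mem_filter.mp this).2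
    exact Finset.Subset.antisymm (main R1 R2 h1.1 h2.1 e1 e2)
      (main R2 R1 h2.1 h1.1 e1.symm e2.symm)
  · rw [Finset.card_sigma]
    simp only [Finset.card_powerset]
    exact le_of_eq (sum_pow_card' B)

lemma card_empty_filter (F : Finset γ) (Q : Finset γ → Prop) [DecidablePred Q]
    (h : ∀ R, R ⊆ F → Q R → R = ∅) :
    (F.powerset.filter (fun R => Q R)).card ≤ 1 := by
  rw [Finset.card_le_one]
  intro R1 h1 R2 h2
  rw [Finset.mem_filter, Finset.mem_powerset] at h1 h2
  rw [h R1 h1.1 h1.2, h R2 h2.1 h2.2]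

end Counting

section Events

variable {n : ℕ} {A B C : Finset (Fin n)}
variable (hAB : Disjoint A B) (hAC : Disjoint A C) (hBC : Disjoint B C)

include hAB hAC hBC

lemma event1_le {x y : Fin n} (hx : x ∈ A) (hy : y ∈ A) (hxy : x ≠ y) :
    ((Etot A B C).powerset.filter
      (fun R => ∀ b, (y, b) ∈ R → (x, b) ∈ R)).card ≤
      3 ^ B.card * 2 ^ ((Etot A B C).card - 2 * B.card) := by
  set F : Finset (Fin n × Fin n) := {x, y} ×ˢ B with hF
  have hFE : F ⊆ Etot A B C := by
    refine (Finset.product_subset_product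
      (Finset.insert_subset hx (Finset.singleton_subset_iff.mpr hy))
      (Finset.Subset.refl B)).trans Finset.subset_union_left
  have hFcard : F.card = 2 * B.card := by
    rw [hF, Finset.card_product, Finset.card_pair hxy]
  have h1 := split_le (Etot A B C) F (fun R => ∀ b, (y, b) ∈ R → (x, b) ∈ R) ?_
  · have h2 := card_row_le F B (fun b => (x, b)) (fun b => (y, b))
      (fun R => ∀ b, (y, b) ∈ R → (x, b) ∈ R) (fun R hR b _ => hR b) ?_
    · calc _ ≤ _ := h1
        _ ≤ 3 ^ B.card * 2 ^ ((Etot A B C) \ F).card :=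
          Nat.mul_le_mul_right _ h2
        _ = 3 ^ B.card * 2 ^ ((Etot A B C).card - 2 * B.card) := by
          rw [Finset.card_sdiff_of_subset hFE, hFcard]
    · rintro ⟨p1, p2⟩ hp
      rw [hF, Finset.mem_product] at hp
      rcases Finset.mem_insert.mp hp.1 with rfl | h
      · exact Or.inl ⟨p2, hp.2, rfl⟩
      · rw [Finset.mem_singleton] at h
        subst h
        exact Or.inr ⟨p2, hp.2, rfl⟩
  · intro R hRE hQ b hb
    rw [Finset.mem_inter] at hb ⊢
    refine ⟨hQ b hb.1, ?_⟩
    rw [hF, Finset.mem_product] at hb ⊢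
    exact ⟨Finset.mem_insert_self x {y}, hb.2.2⟩

lemma event2_le {x y : Fin n} (hx : x ∈ C) (hy : y ∈ C) (hxy : x ≠ y) :
    ((Etot A B C).powerset.filter
      (fun R => ∀ b, (b, x) ∈ R → (b, y) ∈ R)).card ≤
      3 ^ B.card * 2 ^ ((Etot A B C).card - 2 * B.card) := by
  set F : Finset (Fin n × Fin n) := B ×ˢ {x, y} with hF
  have hFE : F ⊆ Etot A B C := by
    refine (Finset.product_subset_product (Finset.Subset.refl B)
      (Finset.insert_subset hx (Finset.singleton_subset_iff.mpr hy))).trans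
      Finset.subset_union_right
  have hFcard : F.card = 2 * B.card := by
    rw [hF, Finset.card_product, Finset.card_pair hxy, mul_comm]
  have h1 := split_le (Etot A B C) F (fun R => ∀ b, (b, x) ∈ R → (b, y) ∈ R) ?_
  · have h2 := card_row_le F B (fun b => (b, y)) (fun b => (b, x))
      (fun R => ∀ b, (b, x) ∈ R → (b, y) ∈ R) (fun R hR b _ => hR b) ?_
    · calc _ ≤ _ := h1
        _ ≤ 3 ^ B.card * 2 ^ ((Etot A B C) \ F).card :=
          Nat.mul_le_mul_right _ h2
        _ = 3 ^ B.card * 2 ^ ((Etot A B C).card - 2 * B.card) := by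
          rw [Finset.card_sdiff_of_subset hFE, hFcard]
    · rintro ⟨p1, p2⟩ hp
      rw [hF, Finset.mem_product] at hp
      rcases Finset.mem_insert.mp hp.2 with rfl | h
      · exact Or.inr ⟨p1, hp.1, rfl⟩
      · rw [Finset.mem_singleton] at h
        subst h
        exact Or.inl ⟨p1, hp.1, rfl⟩
  · intro R hRE hQ b hb
    rw [Finset.mem_inter] at hb ⊢
    refine ⟨hQ b hb.1, ?_⟩
    rw [hF, Finset.mem_product] at hb ⊢
    exact ⟨hb.2.1, Finset.mem_insert_of_mem (Finset.mem_singleton_self y)⟩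

lemma event3_le {x y : Fin n} (hx : x ∈ B) (hy : y ∈ B) (hxy : x ≠ y) :
    ((Etot A B C).powerset.filter
      (fun R => ∀ a, (a, x) ∈ R → (a, y) ∈ R)).card ≤
      3 ^ A.card * 2 ^ ((Etot A B C).card - 2 * A.card) := by
  set F : Finset (Fin n × Fin n) := A ×ˢ {x, y} with hF
  have hFE : F ⊆ Etot A B C := by
    refine (Finset.product_subset_product (Finset.Subset.refl A)
      (Finset.insert_subset hx (Finset.singleton_subset_iff.mpr hy))).trans
      Finset.subset_union_left
  have hFcard : F.card = 2 * A.card := by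
    rw [hF, Finset.card_product, Finset.card_pair hxy, mul_comm]
  have h1 := split_le (Etot A B C) F (fun R => ∀ a, (a, x) ∈ R → (a, y) ∈ R) ?_
  · have h2 := card_row_le F A (fun a => (a, y)) (fun a => (a, x))
      (fun R => ∀ a, (a, x) ∈ R → (a, y) ∈ R) (fun R hR a _ => hR a) ?_
    · calc _ ≤ _ := h1
        _ ≤ 3 ^ A.card * 2 ^ ((Etot A B C) \ F).card :=
          Nat.mul_le_mul_right _ h2
        _ = 3 ^ A.card * 2 ^ ((Etot A B C).card - 2 * A.card) := by
          rw [Finset.card_sdiff_of_subset hFE, hFcard]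
    · rintro ⟨p1, p2⟩ hp
      rw [hF, Finset.mem_product] at hp
      rcases Finset.mem_insert.mp hp.2 with rfl | h
      · exact Or.inr ⟨p1, hp.1, rfl⟩
      · rw [Finset.mem_singleton] at h
        subst h
        exact Or.inl ⟨p1, hp.1, rfl⟩
  · intro R hRE hQ a ha
    rw [Finset.mem_inter] at ha ⊢
    refine ⟨hQ a ha.1, ?_⟩
    rw [hF, Finset.mem_product] at ha ⊢
    exact ⟨ha.2.1, Finset.mem_insert_of_mem (Finset.mem_singleton_self y)⟩

lemma event4_le {a c : Fin n} (ha : a ∈ A) (hc : c ∈ C) :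
    ((Etot A B C).powerset.filter
      (fun R => ∀ b, ¬((a, b) ∈ R ∧ (b, c) ∈ R))).card ≤
      3 ^ B.card * 2 ^ ((Etot A B C).card - 2 * B.card) := by
  set F : Finset (Fin n × Fin n) := {a} ×ˢ B ∪ B ×ˢ {c} with hF
  have hFE : F ⊆ Etot A B C := by
    refine Finset.union_subset ?_ ?_
    · exact (Finset.product_subset_product (Finset.singleton_subset_iff.mpr ha)
        (Finset.Subset.refl B)).trans Finset.subset_union_left
    · exact (Finset.product_subset_product (Finset.Subset.refl B)
        (Finset.singleton_subset_iff.mpr hc)).trans Finset.subset_union_right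
  have hdisj : Disjoint ({a} ×ˢ B) (B ×ˢ {c}) := by
    rw [Finset.disjoint_left]
    rintro ⟨p1, p2⟩ hp hp'
    rw [Finset.mem_product, Finset.mem_singleton] at hp hp'
    exact Finset.disjoint_left.mp hAB (hp.1 ▸ ha) hp'.1
  have hFcard : F.card = 2 * B.card := by
    rw [hF, Finset.card_union_of_disjoint hdisj, Finset.card_product,
      Finset.card_product, Finset.card_singleton, Finset.card_singleton]
    ring
  have h1 := split_le (Etot A B C) F (fun R => ∀ b, ¬((a, b) ∈ R ∧ (b, c) ∈ R)) ?_
  · have h2 := card_disj_le F B (fun b => (a, b)) (fun b => (b, c))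
      (fun R => ∀ b, ¬((a, b) ∈ R ∧ (b, c) ∈ R)) (fun R hR b _ => hR b) ?_
    · calc _ ≤ _ := h1
        _ ≤ 3 ^ B.card * 2 ^ ((Etot A B C) \ F).card :=
          Nat.mul_le_mul_right _ h2
        _ = 3 ^ B.card * 2 ^ ((Etot A B C).card - 2 * B.card) := by
          rw [Finset.card_sdiff_of_subset hFE, hFcard]
    · rintro ⟨p1, p2⟩ hp
      rw [hF, Finset.mem_union, Finset.mem_product, Finset.mem_product,
        Finset.mem_singleton, Finset.mem_singleton] at hp
      rcases hp with ⟨rfl, hq2⟩ | ⟨hq1, rfl⟩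
      · exact Or.inl ⟨p2, hq2, rfl⟩
      · exact Or.inr ⟨p1, hq1, rfl⟩
  · intro R hRE hQ b hb
    exact hQ b ⟨(Finset.mem_inter.mp hb.1).1, (Finset.mem_inter.mp hb.2).1⟩

lemma event5_le {b : Fin n} (hb : b ∈ B) :
    ((Etot A B C).powerset.filter
      (fun R => ∀ a, (a, b) ∉ R)).card ≤ 2 ^ ((Etot A B C).card - A.card) := by
  set F : Finset (Fin n × Fin n) := A ×ˢ {b} with hF
  have hFE : F ⊆ Etot A B C :=
    (Finset.product_subset_product (Finset.Subset.refl A)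
      (Finset.singleton_subset_iff.mpr hb)).trans Finset.subset_union_left
  have hFcard : F.card = A.card := by
    rw [hF, Finset.card_product, Finset.card_singleton, mul_one]
  have h1 := split_le (Etot A B C) F (fun R => ∀ a, (a, b) ∉ R) ?_
  · have h2 := card_empty_filter F (fun R => ∀ a, (a, b) ∉ R) ?_
    · calc _ ≤ _ := h1
        _ ≤ 1 * 2 ^ ((Etot A B C) \ F).card := Nat.mul_le_mul_right _ h2
        _ = 2 ^ ((Etot A B C).card - A.card) := by
          rw [one_mul, Finset.card_sdiff_of_subset hFE, hFcard]
    · intro R hR hQ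
      rw [Finset.eq_empty_iff_forall_notMem]
      rintro ⟨p1, p2⟩ hp
      have := hR hp
      rw [hF, Finset.mem_product, Finset.mem_singleton] at this
      exact hQ p1 (this.2 ▸ hp)
  · intro R hRE hQ a' ha'
    exact hQ a' (Finset.mem_inter.mp ha').1

lemma event6_le {b : Fin n} (hb : b ∈ B) :
    ((Etot A B C).powerset.filter
      (fun R => ∀ c, (b, c) ∉ R)).card ≤ 2 ^ ((Etot A B C).card - C.card) := by
  set F : Finset (Fin n × Fin n) := {b} ×ˢ C with hF
  have hFE : F ⊆ Etot A B C :=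
    (Finset.product_subset_product (Finset.singleton_subset_iff.mpr hb)
      (Finset.Subset.refl C)).trans Finset.subset_union_right
  have hFcard : F.card = C.card := by
    rw [hF, Finset.card_product, Finset.card_singleton, one_mul]
  have h1 := split_le (Etot A B C) F (fun R => ∀ c, (b, c) ∉ R) ?_
  · have h2 := card_empty_filter F (fun R => ∀ c, (b, c) ∉ R) ?_
    · calc _ ≤ _ := h1
        _ ≤ 1 * 2 ^ ((Etot A B C) \ F).card := Nat.mul_le_mul_right _ h2
        _ = 2 ^ ((Etot A B C).card - C.card) := by
          rw [one_mul, Finset.card_sdiff_of_subset hFE, hFcard]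
    · intro R hR hQ
      rw [Finset.eq_empty_iff_forall_notMem]
      rintro ⟨p1, p2⟩ hp
      have := hR hp
      rw [hF, Finset.mem_product, Finset.mem_singleton] at this
      exact hQ p2 (this.1 ▸ hp)
  · intro R hRE hQ c' hc'
    exact hQ c' (Finset.mem_inter.mp hc').1

end Events

section BadDecomp

variable {n : ℕ} {A B C : Finset (Fin n)}
variable (hAB : Disjoint A B) (hAC : Disjoint A C) (hBC : Disjoint B C)

include hAB hAC hBC

lemma bad_witness {R : Finset (Fin n × Fin n)} (hR : R ⊆ Etot A B C)
    (hbad : ¬ TABC n A B C (toP R)) :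
    (∃ x ∈ A, ∃ y ∈ A, x ≠ y ∧ ∀ b, (y, b) ∈ R → (x, b) ∈ R) ∨
    (∃ x ∈ C, ∃ y ∈ C, x ≠ y ∧ ∀ b, (b, x) ∈ R → (b, y) ∈ R) ∨
    (∃ x ∈ B, ∃ y ∈ B, x ≠ y ∧ ∀ a, (a, x) ∈ R → (a, y) ∈ R) ∨
    (∃ a ∈ A, ∃ c ∈ C, ∀ b, ¬((a, b) ∈ R ∧ (b, c) ∈ R)) ∨
    (∃ b ∈ B, ∀ a, (a, b) ∉ R) ∨
    (∃ b ∈ B, ∀ c, (b, c) ∉ R) := by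
  have hspo := toP_spo hAB hAC hBC hR
  rw [TABC, not_and, not_and] at hbad
  replace hbad := hbad hspo
  by_cases hi : ∀ x y : Fin n,
      ((x ∈ A ∧ y ∈ A) ∨ (x ∈ B ∧ y ∈ B) ∨ (x ∈ C ∧ y ∈ C)) → x ≠ y →
        ¬ dSet (toP R) x ⊆ dSet (toP R) y ∨ ¬ uSet (toP R) y ⊆ uSet (toP R) x
  · -- condition (ii) fails
    replace hbad := hbad hi
    simp only [not_forall] at hbad
    obtain ⟨a, ha, b, hb, c, hc, hfail⟩ := hbad
    have hcases : ¬ (uSet (toP R) a ∩ ↑B ∩ dSet (toP R) c).Nonempty ∨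
        ¬ (↑A ∩ dSet (toP R) b).Nonempty ∨ ¬ (uSet (toP R) b ∩ ↑C).Nonempty := by
      by_contra hcon
      push_neg at hcon
      exact hfail ⟨hcon.1, hcon.2.1, hcon.2.2⟩
    rcases hcases with h | h | h
    · refine Or.inr (Or.inr (Or.inr (Or.inl ⟨a, ha, c, hc, fun b' hb' => ?_⟩)))
      have hb'B : b' ∈ B := by
        rcases mem_Etot.mp (hR hb'.1) with ⟨-, h2⟩ | ⟨h1, -⟩
        · exact h2
        · exact absurd h1 (Finset.disjoint_left.mp hAB ha)
      have hmem : b' ∈ uSet (toP R) a ∩ ↑B ∩ dSet (toP R) c :=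
        ⟨⟨Or.inl hb'.1, by exact_mod_cast hb'B⟩, Or.inl hb'.2⟩
      exact h ⟨b', hmem⟩
    · refine Or.inr (Or.inr (Or.inr (Or.inr (Or.inl ⟨b, hb, fun a' ha' => ?_⟩))))
      have ha'A : a' ∈ A := by
        rcases mem_Etot.mp (hR ha') with ⟨h1, -⟩ | ⟨-, h2⟩
        · exact h1
        · exact absurd h2 (Finset.disjoint_left.mp hBC hb)
      have hmem : a' ∈ ↑A ∩ dSet (toP R) b := ⟨by exact_mod_cast ha'A, Or.inl ha'⟩
      exact h ⟨a', hmem⟩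
    · refine Or.inr (Or.inr (Or.inr (Or.inr (Or.inr ⟨b, hb, fun c' hc' => ?_⟩))))
      have hc'C : c' ∈ C := by
        rcases mem_Etot.mp (hR hc') with ⟨h1, -⟩ | ⟨-, h2⟩
        · exact absurd hb (Finset.disjoint_left.mp hAB h1)
        · exact h2
      have hmem : c' ∈ uSet (toP R) b ∩ ↑C := ⟨Or.inl hc', by exact_mod_cast hc'C⟩
      exact h ⟨c', hmem⟩
  · -- condition (i) fails
    push_neg at hi
    obtain ⟨x, y, hlev, hxy, hd, hu⟩ := hi
    rcases hlev with ⟨hx, hy⟩ | ⟨hx, hy⟩ | ⟨hx, hy⟩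
    · refine Or.inl ⟨x, hx, y, hy, hxy, fun b hyb => ?_⟩
      have hbB : b ∈ B := by
        rcases mem_Etot.mp (hR hyb) with ⟨-, h2⟩ | ⟨h1, -⟩
        · exact h2
        · exact absurd h1 (Finset.disjoint_left.mp hAB hy)
      have hxb : (x, b) ∈ toP R := hu (Or.inl hyb)
      rcases toP_mem hAB hAC hBC hR hxb with ⟨-, -, h⟩ | ⟨-, h2, -⟩ | ⟨-, h2, -⟩
      · exact h
      · exact absurd h2 (Finset.disjoint_left.mp hBC hbB)
      · exact absurd h2 (Finset.disjoint_left.mp hBC hbB)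
    · refine Or.inr (Or.inr (Or.inl ⟨x, hx, y, hy, hxy, fun a hax => ?_⟩))
      have haA : a ∈ A := by
        rcases mem_Etot.mp (hR hax) with ⟨h1, -⟩ | ⟨-, h2⟩
        · exact h1
        · exact absurd h2 (Finset.disjoint_left.mp hBC hx)
      have hay : (a, y) ∈ toP R := hd (Or.inl hax)
      rcases toP_mem hAB hAC hBC hR hay with ⟨-, -, h⟩ | ⟨-, h2, -⟩ | ⟨-, h2, -⟩
      · exact h
      · exact absurd h2 (Finset.disjoint_left.mp hBC hy)
      · exact absurd h2 (Finset.disjoint_left.mp hBC hy)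
    · refine Or.inr (Or.inl ⟨x, hx, y, hy, hxy, fun b hbx => ?_⟩)
      have hbB : b ∈ B := by
        rcases mem_Etot.mp (hR hbx) with ⟨-, h2⟩ | ⟨h1, -⟩
        · exact absurd hx (Finset.disjoint_left.mp hBC h2)
        · exact h1
      have hby : (b, y) ∈ toP R := hd (Or.inl hbx)
      rcases toP_mem hAB hAC hBC hR hby with ⟨h1, -, -⟩ | ⟨-, -, h⟩ | ⟨h1, -, -⟩
      · exact absurd hbB (Finset.disjoint_left.mp hAB h1)
      · exact h
      · exact absurd hbB (Finset.disjoint_left.mp hAB h1)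
end BadDecomp

section PerPartition

variable {n m : ℕ} {A B C : Finset (Fin n)}

lemma bad_total (hL : LPart n A B C) (hn : n = 4 * m) :
    ((Etot A B C).powerset.filter (fun R => ¬ TABC n A B C (toP R))).card ≤
      3 * (m * m) * (9 ^ m * 2 ^ (4 * m ^ 2 - 4 * m)) +
      4 * (m * m) * (3 ^ m * 2 ^ (4 * m ^ 2 - 2 * m)) +
      4 * m * 2 ^ (4 * m ^ 2 - m) := by
  obtain ⟨hAB, hAC, hBC, hUn, hcA, hcC, hcB⟩ := hL
  have hA : A.card = m := by rw [hcA, hn]; omega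
  have hC : C.card = m := by rw [hcC, hn]; omega
  have hB : B.card = 2 * m := by rw [hcB, hn]; omega
  have hEdisj : Disjoint (A ×ˢ B) (B ×ˢ C) := by
    rw [Finset.disjoint_left]
    rintro ⟨p1, p2⟩ hp hp'
    rw [Finset.mem_product] at hp hp'
    exact Finset.disjoint_left.mp hAB hp.1 hp'.1
  have hE : (Etot A B C).card = 4 * m ^ 2 := by
    rw [Etot, Finset.card_union_of_disjoint hEdisj, Finset.card_product,
      Finset.card_product, hA, hB, hC]
    ring
  set Ew := Etot A B C with hEw
  set W1 := ((A ×ˢ A).filter (fun p => p.1 ≠ p.2)).biUnion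
    (fun p => Ew.powerset.filter (fun R => ∀ b, (p.2, b) ∈ R → (p.1, b) ∈ R)) with hW1
  set W2 := ((C ×ˢ C).filter (fun p => p.1 ≠ p.2)).biUnion
    (fun p => Ew.powerset.filter (fun R => ∀ b, (b, p.1) ∈ R → (b, p.2) ∈ R)) with hW2
  set W3 := ((B ×ˢ B).filter (fun p => p.1 ≠ p.2)).biUnion
    (fun p => Ew.powerset.filter (fun R => ∀ a, (a, p.1) ∈ R → (a, p.2) ∈ R)) with hW3
  set W4 := (A ×ˢ C).biUnion
    (fun p => Ew.powerset.filter (fun R => ∀ b, ¬((p.1, b) ∈ R ∧ (b, p.2) ∈ R))) with hW4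
  set W5 := B.biUnion (fun b => Ew.powerset.filter (fun R => ∀ a, (a, b) ∉ R)) with hW5
  set W6 := B.biUnion (fun b => Ew.powerset.filter (fun R => ∀ c, (b, c) ∉ R)) with hW6
  have hsub : Ew.powerset.filter (fun R => ¬ TABC n A B C (toP R)) ⊆
      W1 ∪ (W2 ∪ (W3 ∪ (W4 ∪ (W5 ∪ W6)))) := by
    intro R hR
    rw [Finset.mem_filter, Finset.mem_powerset] at hR
    have hRp : R ∈ Ew.powerset := Finset.mem_powerset.mpr hR.1
    rcases bad_witness hAB hAC hBC hR.1 hR.2 with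
      ⟨x, hx, y, hy, hxy, hq⟩ | ⟨x, hx, y, hy, hxy, hq⟩ | ⟨x, hx, y, hy, hxy, hq⟩ |
      ⟨a, ha, c, hc, hq⟩ | ⟨b, hb, hq⟩ | ⟨b, hb, hq⟩
    · refine Finset.mem_union_left _ (Finset.mem_biUnion.mpr ⟨(x, y), ?_, ?_⟩)
      · rw [Finset.mem_filter, Finset.mem_product]; exact ⟨⟨hx, hy⟩, hxy⟩
      · exact Finset.mem_filter.mpr ⟨hRp, hq⟩
    · refine Finset.mem_union_right _ (Finset.mem_union_left _
        (Finset.mem_biUnion.mpr ⟨(x, y), ?_, ?_⟩))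
      · rw [Finset.mem_filter, Finset.mem_product]; exact ⟨⟨hx, hy⟩, hxy⟩
      · exact Finset.mem_filter.mpr ⟨hRp, hq⟩
    · refine Finset.mem_union_right _ (Finset.mem_union_right _ (Finset.mem_union_left _
        (Finset.mem_biUnion.mpr ⟨(x, y), ?_, ?_⟩)))
      · rw [Finset.mem_filter, Finset.mem_product]; exact ⟨⟨hx, hy⟩, hxy⟩
      · exact Finset.mem_filter.mpr ⟨hRp, hq⟩
    · refine Finset.mem_union_right _ (Finset.mem_union_right _ (Finset.mem_union_right _
        (Finset.mem_union_left _ (Finset.mem_biUnion.mpr ⟨(a, c), ?_, ?_⟩))))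
      · rw [Finset.mem_product]; exact ⟨ha, hc⟩
      · exact Finset.mem_filter.mpr ⟨hRp, hq⟩
    · exact Finset.mem_union_right _ (Finset.mem_union_right _ (Finset.mem_union_right _
        (Finset.mem_union_right _ (Finset.mem_union_left _
          (Finset.mem_biUnion.mpr ⟨b, hb, Finset.mem_filter.mpr ⟨hRp, hq⟩⟩)))))
    · exact Finset.mem_union_right _ (Finset.mem_union_right _ (Finset.mem_union_right _
        (Finset.mem_union_right _ (Finset.mem_union_right _
          (Finset.mem_biUnion.mpr ⟨b, hb, Finset.mem_filter.mpr ⟨hRp, hq⟩⟩)))))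
  have bW1 : W1.card ≤ m * m * (9 ^ m * 2 ^ (4 * m ^ 2 - 4 * m)) := by
    refine (Finset.card_biUnion_le).trans ?_
    have hbound : ∀ p ∈ (A ×ˢ A).filter (fun p => p.1 ≠ p.2),
        (Ew.powerset.filter (fun R => ∀ b, (p.2, b) ∈ R → (p.1, b) ∈ R)).card ≤
          9 ^ m * 2 ^ (4 * m ^ 2 - 4 * m) := by
      rintro ⟨x, y⟩ hp
      rw [Finset.mem_filter, Finset.mem_product] at hp
      have := event1_le hAB hAC hBC hp.1.1 hp.1.2 hp.2
      rw [hB, hE] at this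
      calc _ ≤ _ := this
        _ = 9 ^ m * 2 ^ (4 * m ^ 2 - 4 * m) := by
          rw [pow_mul, show 2 * (2 * m) = 4 * m from by ring]
          norm_num
    refine (Finset.sum_le_card_nsmul _ _ _ hbound).trans ?_
    rw [smul_eq_mul]
    refine Nat.mul_le_mul_right _ ?_
    calc ((A ×ˢ A).filter (fun p => p.1 ≠ p.2)).card ≤ (A ×ˢ A).card :=
        Finset.card_le_card (Finset.filter_subset _ _)
      _ = m * m := by rw [Finset.card_product, hA]
  have bW2 : W2.card ≤ m * m * (9 ^ m * 2 ^ (4 * m ^ 2 - 4 * m)) := by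
    refine (Finset.card_biUnion_le).trans ?_
    have hbound : ∀ p ∈ (C ×ˢ C).filter (fun p => p.1 ≠ p.2),
        (Ew.powerset.filter (fun R => ∀ b, (b, p.1) ∈ R → (b, p.2) ∈ R)).card ≤
          9 ^ m * 2 ^ (4 * m ^ 2 - 4 * m) := by
      rintro ⟨x, y⟩ hp
      rw [Finset.mem_filter, Finset.mem_product] at hp
      have := event2_le hAB hAC hBC hp.1.1 hp.1.2 hp.2
      rw [hB, hE] at this
      calc _ ≤ _ := this
        _ = 9 ^ m * 2 ^ (4 * m ^ 2 - 4 * m) := by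
          rw [pow_mul, show 2 * (2 * m) = 4 * m from by ring]
          norm_num
    refine (Finset.sum_le_card_nsmul _ _ _ hbound).trans ?_
    rw [smul_eq_mul]
    refine Nat.mul_le_mul_right _ ?_
    calc ((C ×ˢ C).filter (fun p => p.1 ≠ p.2)).card ≤ (C ×ˢ C).card :=
        Finset.card_le_card (Finset.filter_subset _ _)
      _ = m * m := by rw [Finset.card_product, hC]
  have bW3 : W3.card ≤ 4 * (m * m) * (3 ^ m * 2 ^ (4 * m ^ 2 - 2 * m)) := by
    refine (Finset.card_biUnion_le).trans ?_
    have hbound : ∀ p ∈ (B ×ˢ B).filter (fun p => p.1 ≠ p.2),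
        (Ew.powerset.filter (fun R => ∀ a, (a, p.1) ∈ R → (a, p.2) ∈ R)).card ≤
          3 ^ m * 2 ^ (4 * m ^ 2 - 2 * m) := by
      rintro ⟨x, y⟩ hp
      rw [Finset.mem_filter, Finset.mem_product] at hp
      have := event3_le hAB hAC hBC hp.1.1 hp.1.2 hp.2
      rw [hA, hE] at this
      exact this
    refine (Finset.sum_le_card_nsmul _ _ _ hbound).trans ?_
    rw [smul_eq_mul]
    have : ((B ×ˢ B).filter (fun p => p.1 ≠ p.2)).card ≤ 4 * (m * m) := by
      calc ((B ×ˢ B).filter (fun p => p.1 ≠ p.2)).card ≤ (B ×ˢ B).card :=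
          Finset.card_le_card (Finset.filter_subset _ _)
        _ = 4 * (m * m) := by rw [Finset.card_product, hB]; ring
    exact Nat.mul_le_mul_right _ this
  have bW4 : W4.card ≤ m * m * (9 ^ m * 2 ^ (4 * m ^ 2 - 4 * m)) := by
    refine (Finset.card_biUnion_le).trans ?_
    have hbound : ∀ p ∈ A ×ˢ C,
        (Ew.powerset.filter (fun R => ∀ b, ¬((p.1, b) ∈ R ∧ (b, p.2) ∈ R))).card ≤
          9 ^ m * 2 ^ (4 * m ^ 2 - 4 * m) := by
      rintro ⟨a, c⟩ hp
      rw [Finset.mem_product] at hp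
      have := event4_le hAB hAC hBC hp.1 hp.2
      rw [hB, hE] at this
      calc _ ≤ _ := this
        _ = 9 ^ m * 2 ^ (4 * m ^ 2 - 4 * m) := by
          rw [pow_mul, show 2 * (2 * m) = 4 * m from by ring]
          norm_num
    refine (Finset.sum_le_card_nsmul _ _ _ hbound).trans ?_
    rw [smul_eq_mul]
    refine Nat.mul_le_mul_right _ ?_
    rw [Finset.card_product, hA, hC]
  have bW5 : W5.card ≤ 2 * m * 2 ^ (4 * m ^ 2 - m) := by
    refine (Finset.card_biUnion_le).trans ?_
    have hbound : ∀ b ∈ B,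
        (Ew.powerset.filter (fun R => ∀ a, (a, b) ∉ R)).card ≤ 2 ^ (4 * m ^ 2 - m) := by
      intro b hb
      have := event5_le hAB hAC hBC hb
      rw [hA, hE] at this
      exact this
    refine (Finset.sum_le_card_nsmul _ _ _ hbound).trans ?_
    rw [smul_eq_mul, hB]
  have bW6 : W6.card ≤ 2 * m * 2 ^ (4 * m ^ 2 - m) := by
    refine (Finset.card_biUnion_le).trans ?_
    have hbound : ∀ b ∈ B,
        (Ew.powerset.filter (fun R => ∀ c, (b, c) ∉ R)).card ≤ 2 ^ (4 * m ^ 2 - m) := by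
      intro b hb
      have := event6_le hAB hAC hBC hb
      rw [hC, hE] at this
      exact this
    refine (Finset.sum_le_card_nsmul _ _ _ hbound).trans ?_
    rw [smul_eq_mul, hB]
  calc (Ew.powerset.filter (fun R => ¬ TABC n A B C (toP R))).card
      ≤ (W1 ∪ (W2 ∪ (W3 ∪ (W4 ∪ (W5 ∪ W6))))).card := Finset.card_le_card hsub
    _ ≤ W1.card + (W2.card + (W3.card + (W4.card + (W5.card + W6.card)))) := by
        refine (Finset.card_union_le _ _).trans ?_
        refine Nat.add_le_add_left ?_ _
        refine (Finset.card_union_le _ _).trans ?_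
        refine Nat.add_le_add_left ?_ _
        refine (Finset.card_union_le _ _).trans ?_
        refine Nat.add_le_add_left ?_ _
        refine (Finset.card_union_le _ _).trans ?_
        refine Nat.add_le_add_left ?_ _
        exact Finset.card_union_le _ _
    _ ≤ m * m * (9 ^ m * 2 ^ (4 * m ^ 2 - 4 * m)) +
        (m * m * (9 ^ m * 2 ^ (4 * m ^ 2 - 4 * m)) +
        (4 * (m * m) * (3 ^ m * 2 ^ (4 * m ^ 2 - 2 * m)) +
        (m * m * (9 ^ m * 2 ^ (4 * m ^ 2 - 4 * m)) +
        (2 * m * 2 ^ (4 * m ^ 2 - m) + 2 * m * 2 ^ (4 * m ^ 2 - m))))) := by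
        exact Nat.add_le_add bW1 (Nat.add_le_add bW2 (Nat.add_le_add bW3
          (Nat.add_le_add bW4 (Nat.add_le_add bW5 bW6))))
    _ = 3 * (m * m) * (9 ^ m * 2 ^ (4 * m ^ 2 - 4 * m)) +
        4 * (m * m) * (3 ^ m * 2 ^ (4 * m ^ 2 - 2 * m)) +
        4 * m * 2 ^ (4 * m ^ 2 - m) := by ring

end PerPartition

section NcardLemmas

variable {ι β : Type*} [Finite β]

lemma ncard_biUnion_le (s : Finset ι) (f : ι → Set β) :
    (⋃ i ∈ s, f i).ncard ≤ ∑ i ∈ s, (f i).ncard := by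
  classical
  induction s using Finset.induction_on with
  | empty => simp
  | insert a s hnotmem ih =>
    rw [Finset.set_biUnion_insert, Finset.sum_insert hnotmem]
    exact (Set.ncard_union_le _ _).trans (Nat.add_le_add_left ih _)

lemma sum_le_ncard_biUnion (s : Finset ι) (f : ι → Set β)
    (hdisj : ∀ i ∈ s, ∀ j ∈ s, i ≠ j → Disjoint (f i) (f j)) :
    ∑ i ∈ s, (f i).ncard ≤ (⋃ i ∈ s, f i).ncard := by
  classical
  induction s using Finset.induction_on with
  | empty => simp
  | insert a s hnotmem ih =>
    rw [Finset.set_biUnion_insert, Finset.sum_insert hnotmem]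
    have hd : Disjoint (f a) (⋃ i ∈ s, f i) := by
      rw [Set.disjoint_left]
      intro x hx hx'
      rw [Set.mem_iUnion₂] at hx'
      obtain ⟨i, hi, hxi⟩ := hx'
      have hne : a ≠ i := by rintro rfl; exact hnotmem hi
      exact Set.disjoint_left.mp
        (hdisj a (Finset.mem_insert_self a s) i (Finset.mem_insert_of_mem hi) hne) hx hxi
    rw [Set.ncard_union_eq hd (Set.toFinite _) (Set.toFinite _)]
    refine Nat.add_le_add_left (ih ?_) _
    intro i hi j hj hij
    exact hdisj i (Finset.mem_insert_of_mem hi) j (Finset.mem_insert_of_mem hj) hij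

end NcardLemmas

section Exists

lemma exists_LPart (m : ℕ) : ∃ A B C : Finset (Fin (4 * m)), LPart (4 * m) A B C := by
  classical
  have hcard : (Finset.univ : Finset (Fin (4 * m))).card = 4 * m := by
    simp
  obtain ⟨A, -, hA⟩ := Finset.exists_subset_card_eq
    (s := (Finset.univ : Finset (Fin (4 * m)))) (n := m) (by omega)
  have hAc : (Finset.univ \ A).card = 3 * m := by
    rw [Finset.card_sdiff_of_subset (Finset.subset_univ A), hcard, hA]; omega
  obtain ⟨K, hKsub, hK⟩ := Finset.exists_subset_card_eq
    (s := Finset.univ \ A) (n := m) (by omega)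
  set B := (Finset.univ \ A) \ K with hBdef
  have hdAK : Disjoint A K := by
    rw [Finset.disjoint_left]
    intro x hx hx'
    exact (Finset.mem_sdiff.mp (hKsub hx')).2 hx
  have hdAB : Disjoint A B := by
    rw [Finset.disjoint_left]
    intro x hx hx'
    exact (Finset.mem_sdiff.mp (Finset.mem_sdiff.mp hx').1).2 hx
  have hdBK : Disjoint B K := by
    rw [Finset.disjoint_left]
    intro x hx hx'
    exact (Finset.mem_sdiff.mp hx).2 hx'
  refine ⟨A, B, K, hdAB, hdAK, hdBK, ?_, ?_, ?_, ?_⟩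
  · ext x
    simp only [Finset.mem_union, Finset.mem_univ, iff_true]
    by_cases hxA : x ∈ A
    · exact Or.inl (Or.inl hxA)
    · by_cases hxK : x ∈ K
      · exact Or.inr hxK
      · exact Or.inl (Or.inr (by
          rw [hBdef, Finset.mem_sdiff, Finset.mem_sdiff]
          exact ⟨⟨Finset.mem_univ x, hxA⟩, hxK⟩))
  · rw [hA]; omega
  · rw [hK]; omega
  · have : B.card = 2 * m := by
      rw [hBdef, Finset.card_sdiff_of_subset hKsub, hAc, hK]; omega
    rw [this]; omega

end Exists

section Global

variable {n m : ℕ} {A B C : Finset (Fin n)}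

lemma Tpart_eq_image (hL : LPart n A B C) (hm : 1 ≤ m) (hn : n = 4 * m) :
    {P : Set (Fin n × Fin n) | TABC n A B C P} =
      toP '' ↑((Etot A B C).powerset.filter (fun R => TABC n A B C (toP R))) := by
  obtain ⟨hAB, hAC, hBC, hUn, hcA, hcC, hcB⟩ := hL
  have hAne : A.Nonempty := by
    rw [← Finset.card_pos, hcA, hn]; omega
  have hBne : B.Nonempty := by
    rw [← Finset.card_pos, hcB, hn]; omega
  have hCne : C.Nonempty := by
    rw [← Finset.card_pos, hcC, hn]; omega
  ext P
  constructor
  · intro hT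
    have hU : UABC n A B C P := TABC_sub_UABC hUn hAne hBne hCne hT
    obtain ⟨R, hRmem, hRP⟩ := UABC_rep hAB hAC hBC hU
    refine ⟨R, ?_, hRP⟩
    rw [Finset.coe_filter]
    exact ⟨Finset.mem_coe.mpr hRmem, hRP.symm ▸ hT⟩
  · rintro ⟨R, hR, rfl⟩
    rw [Finset.coe_filter] at hR
    exact hR.2

lemma Tpart_ncard (hL : LPart n A B C) (hm : 1 ≤ m) (hn : n = 4 * m) :
    {P : Set (Fin n × Fin n) | TABC n A B C P}.ncard =
      ((Etot A B C).powerset.filter (fun R => TABC n A B C (toP R))).card := by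
  obtain ⟨hAB, hAC, hBC, hUn, hcA, hcC, hcB⟩ := hL
  rw [Tpart_eq_image ⟨hAB, hAC, hBC, hUn, hcA, hcC, hcB⟩ hm hn]
  rw [Set.ncard_image_of_injOn, Set.ncard_coe_finset]
  intro R1 h1 R2 h2 heq
  rw [Finset.mem_coe, Finset.mem_filter, Finset.mem_powerset] at h1 h2
  exact toP_injOn hAB hAC hBC h1.1 h2.1 heq

lemma UdiffT_ncard (hL : LPart n A B C) :
    {P : Set (Fin n × Fin n) | UABC n A B C P ∧ ¬ TABC n A B C P}.ncard ≤
      ((Etot A B C).powerset.filter (fun R => ¬ TABC n A B C (toP R))).card := by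
  obtain ⟨hAB, hAC, hBC, hUn, hcA, hcC, hcB⟩ := hL
  have hsub : {P : Set (Fin n × Fin n) | UABC n A B C P ∧ ¬ TABC n A B C P} ⊆
      toP '' ↑((Etot A B C).powerset.filter (fun R => ¬ TABC n A B C (toP R))) := by
    intro P hP
    obtain ⟨R, hRmem, hRP⟩ := UABC_rep hAB hAC hBC hP.1
    refine ⟨R, ?_, hRP⟩
    rw [Finset.coe_filter]
    exact ⟨Finset.mem_coe.mpr hRmem, hRP.symm ▸ hP.2⟩
  calc _ ≤ (toP '' ↑((Etot A B C).powerset.filter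
        (fun R => ¬ TABC n A B C (toP R)))).ncard :=
      Set.ncard_le_ncard hsub (Set.toFinite _)
    _ ≤ (↑((Etot A B C).powerset.filter (fun R => ¬ TABC n A B C (toP R))) :
        Set (Finset (Fin n × Fin n))).ncard := Set.ncard_image_le (Set.toFinite _)
    _ = _ := Set.ncard_coe_finset _

/-- the index finset of partitions -/
noncomputable def LFin (n : ℕ) : Finset (Finset (Fin n) × Finset (Fin n) × Finset (Fin n)) :=
  Finset.univ.filter (fun t => LPart n t.1 t.2.1 t.2.2)

noncomputable def Kb (m : ℕ) : ℕ :=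
  3 * (m * m) * (9 ^ m * 2 ^ (4 * m ^ 2 - 4 * m)) +
  4 * (m * m) * (3 ^ m * 2 ^ (4 * m ^ 2 - 2 * m)) +
  4 * m * 2 ^ (4 * m ^ 2 - m)

lemma Tset_eq_biUnion : Tset n = ⋃ t ∈ LFin n, {P | TABC n t.1 t.2.1 t.2.2 P} := by
  ext P
  simp only [Tset, Set.mem_setOf_eq, Set.mem_iUnion₂]
  constructor
  · rintro ⟨A, B, C, hL, hT⟩
    exact ⟨(A, B, C), by simp [LFin, hL], hT⟩
  · rintro ⟨⟨A, B, C⟩, ht, hT⟩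
    rw [LFin, Finset.mem_filter] at ht
    exact ⟨A, B, C, ht.2, hT⟩

lemma Tset_sub_Uset (hdvd : 4 ∣ n) : Tset n ⊆ Uset n := by
  intro P hP
  obtain ⟨A, B, C, hL, hT⟩ := hP
  obtain ⟨m', hm'⟩ := hdvd
  rcases Nat.eq_zero_or_pos m' with rfl | hpos
  · -- n = 0 : covRel is trivially contained
    refine ⟨A, B, C, hL, (hT.1 : IsSPO P), ?_⟩
    intro p hp
    subst hm'
    exact p.1.elim0
  · obtain ⟨hAB, hAC, hBC, hUn, hcA, hcC, hcB⟩ := hL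
    have hAne : A.Nonempty := by
      rw [← Finset.card_pos, hcA, hm']; omega
    have hBne : B.Nonempty := by
      rw [← Finset.card_pos, hcB, hm']; omega
    have hCne : C.Nonempty := by
      rw [← Finset.card_pos, hcC, hm']; omega
    exact ⟨A, B, C, ⟨hAB, hAC, hBC, hUn, hcA, hcC, hcB⟩,
      TABC_sub_UABC hUn hAne hBne hCne hT⟩

lemma T_disjoint (hm : 1 ≤ m) (hn : n = 4 * m) :
    ∀ t ∈ LFin n, ∀ t' ∈ LFin n, t ≠ t' →
      Disjoint {P : Set (Fin n × Fin n) | TABC n t.1 t.2.1 t.2.2 P}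
        {P : Set (Fin n × Fin n) | TABC n t'.1 t'.2.1 t'.2.2 P} := by
  rintro ⟨A, B, C⟩ ht ⟨A', B', C'⟩ ht' hne
  rw [LFin, Finset.mem_filter] at ht ht'
  rw [Set.disjoint_left]
  intro P hP hP'
  have hL := ht.2
  have hL' := ht'.2
  have hAne : A.Nonempty := by
    rw [← Finset.card_pos, hL.2.2.2.2.1, hn]; omega
  have hBne : B.Nonempty := by
    rw [← Finset.card_pos, hL.2.2.2.2.2.2, hn]; omega
  have hCne : C.Nonempty := by
    rw [← Finset.card_pos, hL.2.2.2.2.2.1, hn]; omega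
  have hA'ne : A'.Nonempty := by
    rw [← Finset.card_pos, hL'.2.2.2.2.1, hn]; omega
  have hB'ne : B'.Nonempty := by
    rw [← Finset.card_pos, hL'.2.2.2.2.2.2, hn]; omega
  have hC'ne : C'.Nonempty := by
    rw [← Finset.card_pos, hL'.2.2.2.2.2.1, hn]; omega
  have hU' : UABC n A' B' C' P := TABC_sub_UABC hL'.2.2.2.1 hA'ne hB'ne hC'ne hP'
  obtain ⟨e1, e2, e3⟩ := part_unique hL hL' hAne hBne hCne hP hU'
  exact hne (by rw [Prod.ext_iff, Prod.ext_iff]; exact ⟨e1, e2, e3⟩)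

end Global

section Final

lemma Etot_card_eq {n m : ℕ} {A B C : Finset (Fin n)} (hL : LPart n A B C)
    (hn : n = 4 * m) : (Etot A B C).card = 4 * m ^ 2 := by
  obtain ⟨hAB, hAC, hBC, hUn, hcA, hcC, hcB⟩ := hL
  have hA : A.card = m := by rw [hcA, hn]; omega
  have hC : C.card = m := by rw [hcC, hn]; omega
  have hB : B.card = 2 * m := by rw [hcB, hn]; omega
  have hEdisj : Disjoint (A ×ˢ B) (B ×ˢ C) := by
    rw [Finset.disjoint_left]
    rintro ⟨p1, p2⟩ hp hp'
    rw [Finset.mem_product] at hp hp'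
    exact Finset.disjoint_left.mp hAB hp.1 hp'.1
  rw [Etot, Finset.card_union_of_disjoint hEdisj, Finset.card_product,
    Finset.card_product, hA, hB, hC]
  ring

lemma main_nat (m : ℕ) (hm : 1 ≤ m) :
    (Tset (4 * m)).ncard ≤ (Uset (4 * m)).ncard ∧
    (Uset (4 * m)).ncard ≤ (Tset (4 * m)).ncard + (LFin (4 * m)).card * Kb m ∧
    (LFin (4 * m)).card * 2 ^ (4 * m ^ 2) ≤ (Tset (4 * m)).ncard + (LFin (4 * m)).card * Kb m ∧
    1 ≤ (LFin (4 * m)).card := by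
  set n := 4 * m with hn'
  have hn : n = 4 * m := rfl
  have hTU : (Tset n).ncard ≤ (Uset n).ncard :=
    Set.ncard_le_ncard (Tset_sub_Uset ⟨m, hn⟩) (Set.toFinite _)
  -- per partition: TFin.card + Kb ≥ 2^(4m²)
  have hper : ∀ t ∈ LFin n, 2 ^ (4 * m ^ 2) ≤
      {P : Set (Fin n × Fin n) | TABC n t.1 t.2.1 t.2.2 P}.ncard + Kb m := by
    rintro ⟨A, B, C⟩ ht
    rw [LFin, Finset.mem_filter] at ht
    have hL := ht.2
    have hbad := bad_total hL hn
    have hTcard := Tpart_ncard hL hm hn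
    have hcover : (Etot A B C).powerset ⊆
        (Etot A B C).powerset.filter (fun R => TABC n A B C (toP R)) ∪
        (Etot A B C).powerset.filter (fun R => ¬ TABC n A B C (toP R)) := by
      intro R hR
      by_cases h : TABC n A B C (toP R)
      · exact Finset.mem_union_left _ (Finset.mem_filter.mpr ⟨hR, h⟩)
      · exact Finset.mem_union_right _ (Finset.mem_filter.mpr ⟨hR, h⟩)
    have htot : 2 ^ (4 * m ^ 2) ≤
        ((Etot A B C).powerset.filter (fun R => TABC n A B C (toP R))).card +
        ((Etot A B C).powerset.filter (fun R => ¬ TABC n A B C (toP R))).card := by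
      calc 2 ^ (4 * m ^ 2) = (Etot A B C).powerset.card := by
            rw [Finset.card_powerset, Etot_card_eq hL hn]
        _ ≤ _ := (Finset.card_le_card hcover).trans (Finset.card_union_le _ _)
    rw [hTcard]
    exact htot.trans (Nat.add_le_add_left hbad _)
  -- lower bound for Tset
  have hTlow : (LFin n).card * 2 ^ (4 * m ^ 2) ≤ (Tset n).ncard + (LFin n).card * Kb m := by
    have hsum : ∑ t ∈ LFin n, {P : Set (Fin n × Fin n) | TABC n t.1 t.2.1 t.2.2 P}.ncard ≤
        (Tset n).ncard := by
      rw [Tset_eq_biUnion]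
      exact sum_le_ncard_biUnion _ _ (T_disjoint hm hn)
    calc (LFin n).card * 2 ^ (4 * m ^ 2)
        = ∑ _t ∈ LFin n, 2 ^ (4 * m ^ 2) := by rw [Finset.sum_const, smul_eq_mul]
      _ ≤ ∑ t ∈ LFin n, ({P : Set (Fin n × Fin n) | TABC n t.1 t.2.1 t.2.2 P}.ncard + Kb m) :=
          Finset.sum_le_sum hper
      _ = (∑ t ∈ LFin n, {P : Set (Fin n × Fin n) | TABC n t.1 t.2.1 t.2.2 P}.ncard) +
          (LFin n).card * Kb m := by rw [Finset.sum_add_distrib, Finset.sum_const, smul_eq_mul]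
      _ ≤ (Tset n).ncard + (LFin n).card * Kb m := Nat.add_le_add_right hsum _
  -- upper bound for Uset
  have hUup : (Uset n).ncard ≤ (Tset n).ncard + (LFin n).card * Kb m := by
    have hUsub : Uset n ⊆ Tset n ∪
        ⋃ t ∈ LFin n, {P : Set (Fin n × Fin n) |
          UABC n t.1 t.2.1 t.2.2 P ∧ ¬ TABC n t.1 t.2.1 t.2.2 P} := by
      intro P hP
      by_cases hPT : P ∈ Tset n
      · exact Or.inl hPT
      · obtain ⟨A, B, C, hL, hU⟩ := hP
        refine Or.inr ?_
        rw [Set.mem_iUnion₂]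
        refine ⟨(A, B, C), by simp [LFin, hL], hU, fun hT => hPT ⟨A, B, C, hL, hT⟩⟩
    have hdiff : (⋃ t ∈ LFin n, {P : Set (Fin n × Fin n) |
        UABC n t.1 t.2.1 t.2.2 P ∧ ¬ TABC n t.1 t.2.1 t.2.2 P}).ncard ≤
        (LFin n).card * Kb m := by
      refine (ncard_biUnion_le _ _).trans ?_
      have hb : ∀ t ∈ LFin n, {P : Set (Fin n × Fin n) |
          UABC n t.1 t.2.1 t.2.2 P ∧ ¬ TABC n t.1 t.2.1 t.2.2 P}.ncard ≤ Kb m := by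
        rintro ⟨A, B, C⟩ ht
        rw [LFin, Finset.mem_filter] at ht
        exact (UdiffT_ncard ht.2).trans (bad_total ht.2 hn)
      refine (Finset.sum_le_card_nsmul _ _ _ hb).trans ?_
      rw [smul_eq_mul]
    calc (Uset n).ncard ≤ (Tset n ∪ ⋃ t ∈ LFin n, {P : Set (Fin n × Fin n) |
          UABC n t.1 t.2.1 t.2.2 P ∧ ¬ TABC n t.1 t.2.1 t.2.2 P}).ncard :=
        Set.ncard_le_ncard hUsub (Set.toFinite _)
      _ ≤ (Tset n).ncard + (⋃ t ∈ LFin n, {P : Set (Fin n × Fin n) |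
          UABC n t.1 t.2.1 t.2.2 P ∧ ¬ TABC n t.1 t.2.1 t.2.2 P}).ncard :=
        Set.ncard_union_le _ _
      _ ≤ (Tset n).ncard + (LFin n).card * Kb m := Nat.add_le_add_left hdiff _
  have hL1 : 1 ≤ (LFin n).card := by
    obtain ⟨A, B, C, hL⟩ := exists_LPart m
    exact Finset.card_pos.mpr ⟨(A, B, C), by simp [LFin, hL]; exact hL⟩
  exact ⟨hTU, hUup, hTlow, hL1⟩

lemma Kb_real_le (m : ℕ) (hm : 1 ≤ m) :
    (Kb m : ℝ) ≤ 2 ^ (4 * m ^ 2) * (11 * (m : ℝ) ^ 2 * (3 / 4) ^ m) := by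
  have hsplit1 : (2 : ℝ) ^ (4 * m ^ 2) = 2 ^ (4 * m ^ 2 - 4 * m) * 2 ^ (4 * m) := by
    rw [← pow_add]
    congr 1
    have : 4 * m ≤ 4 * m ^ 2 := by nlinarith
    omega
  have hsplit2 : (2 : ℝ) ^ (4 * m ^ 2) = 2 ^ (4 * m ^ 2 - 2 * m) * 2 ^ (2 * m) := by
    rw [← pow_add]
    congr 1
    have : 2 * m ≤ 4 * m ^ 2 := by nlinarith
    omega
  have hsplit3 : (2 : ℝ) ^ (4 * m ^ 2) = 2 ^ (4 * m ^ 2 - m) * 2 ^ m := by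
    rw [← pow_add]
    congr 1
    have : m ≤ 4 * m ^ 2 := by nlinarith
    omega
  have ht1 : (9 : ℝ) ^ m * 2 ^ (4 * m ^ 2 - 4 * m) ≤ 2 ^ (4 * m ^ 2) * (3 / 4) ^ m := by
    rw [hsplit1]
    have h12 : (2 : ℝ) ^ (4 * m) * (3 / 4) ^ m = 12 ^ m := by
      rw [pow_mul, ← mul_pow]
      norm_num
    calc (9 : ℝ) ^ m * 2 ^ (4 * m ^ 2 - 4 * m) ≤ 12 ^ m * 2 ^ (4 * m ^ 2 - 4 * m) := by
          refine mul_le_mul_of_nonneg_right (pow_le_pow_left₀ (by norm_num) (by norm_num) m)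
            (by positivity)
      _ = 2 ^ (4 * m ^ 2 - 4 * m) * 2 ^ (4 * m) * (3 / 4) ^ m := by rw [← h12]; ring
  have ht2 : (3 : ℝ) ^ m * 2 ^ (4 * m ^ 2 - 2 * m) ≤ 2 ^ (4 * m ^ 2) * (3 / 4) ^ m := by
    rw [hsplit2]
    have h3 : (2 : ℝ) ^ (2 * m) * (3 / 4) ^ m = 3 ^ m := by
      rw [pow_mul, ← mul_pow]
      norm_num
    refine le_of_eq ?_
    rw [← h3]
    ring
  have ht3 : (2 : ℝ) ^ (4 * m ^ 2 - m) ≤ 2 ^ (4 * m ^ 2) * (3 / 4) ^ m := by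
    rw [hsplit3]
    have h32 : (1 : ℝ) ≤ 2 ^ m * (3 / 4) ^ m := by
      rw [← mul_pow]
      refine one_le_pow₀ ?_
      norm_num
    calc (2 : ℝ) ^ (4 * m ^ 2 - m) = 2 ^ (4 * m ^ 2 - m) * 1 := by ring
      _ ≤ 2 ^ (4 * m ^ 2 - m) * (2 ^ m * (3 / 4) ^ m) := by
          refine mul_le_mul_of_nonneg_left h32 (by positivity)
      _ = 2 ^ (4 * m ^ 2 - m) * 2 ^ m * (3 / 4) ^ m := by ring
  have hmm : (m : ℝ) * m = (m : ℝ) ^ 2 := by ring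
  have hm1 : (1 : ℝ) ≤ (m : ℝ) := by exact_mod_cast hm
  have hmle : (m : ℝ) ≤ (m : ℝ) ^ 2 := by nlinarith
  rw [Kb]
  push_cast
  calc (3 : ℝ) * (m * m) * (9 ^ m * 2 ^ (4 * m ^ 2 - 4 * m)) +
        4 * (m * m) * (3 ^ m * 2 ^ (4 * m ^ 2 - 2 * m)) +
        4 * m * 2 ^ (4 * m ^ 2 - m)
      ≤ 3 * (m * m) * (2 ^ (4 * m ^ 2) * (3 / 4) ^ m) +
        4 * (m * m) * (2 ^ (4 * m ^ 2) * (3 / 4) ^ m) +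
        4 * m * (2 ^ (4 * m ^ 2) * (3 / 4) ^ m) := by
        refine add_le_add (add_le_add ?_ ?_) ?_
        · exact mul_le_mul_of_nonneg_left ht1 (by positivity)
        · exact mul_le_mul_of_nonneg_left ht2 (by positivity)
        · exact mul_le_mul_of_nonneg_left ht3 (by positivity)
    _ = (7 * (m : ℝ) ^ 2 + 4 * m) * (2 ^ (4 * m ^ 2) * (3 / 4) ^ m) := by ring
    _ ≤ (11 * (m : ℝ) ^ 2) * (2 ^ (4 * m ^ 2) * (3 / 4) ^ m) := by
        refine mul_le_mul_of_nonneg_right ?_ (by positivity)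
        nlinarith
    _ = 2 ^ (4 * m ^ 2) * (11 * (m : ℝ) ^ 2 * (3 / 4) ^ m) := by ring

end Final

theorem stmt13' :
    (∀ n : ℕ, 4 ∣ n → Tset n ⊆ Uset n) ∧
    Filter.Tendsto
      (fun m : ℕ => (4 * m : ℝ) *
        (1 - ((Tset (4 * m)).ncard : ℝ) / ((Uset (4 * m)).ncard : ℝ)))
      Filter.atTop (nhds 0) := by
  constructor
  · exact fun n hdvd => Tset_sub_Uset hdvd
  · set g : ℕ → ℝ := fun m => 11 * (m : ℝ) ^ 2 * (3 / 4) ^ m with hg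
    have hgt : Filter.Tendsto g Filter.atTop (nhds 0) := by
      have h := (tendsto_pow_const_mul_const_pow_of_lt_one 2
        (by norm_num : (0:ℝ) ≤ 3/4) (by norm_num : (3/4:ℝ) < 1)).const_mul (11 : ℝ)
      rw [mul_zero] at h
      refine h.congr fun m => by rw [hg]; ring
    have hGt : Filter.Tendsto (fun m : ℕ => 88 * (m : ℝ) ^ 3 * (3 / 4) ^ m)
        Filter.atTop (nhds 0) := by
      have h := (tendsto_pow_const_mul_const_pow_of_lt_one 3
        (by norm_num : (0:ℝ) ≤ 3/4) (by norm_num : (3/4:ℝ) < 1)).const_mul (88 : ℝ)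
      rw [mul_zero] at h
      refine h.congr fun m => by ring
    have hev : ∀ᶠ m : ℕ in Filter.atTop, 1 ≤ m ∧ g m ≤ 1 / 2 := by
      filter_upwards [Filter.eventually_ge_atTop 1,
        hgt.eventually_le_const (by norm_num : (0:ℝ) < 1/2)] with m h1 h2
      exact ⟨h1, h2⟩
    -- main eventual facts
    have hkey : ∀ᶠ m : ℕ in Filter.atTop,
        0 ≤ (4 * m : ℝ) * (1 - ((Tset (4 * m)).ncard : ℝ) / ((Uset (4 * m)).ncard : ℝ)) ∧
        (4 * m : ℝ) * (1 - ((Tset (4 * m)).ncard : ℝ) / ((Uset (4 * m)).ncard : ℝ)) ≤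
          88 * (m : ℝ) ^ 3 * (3 / 4) ^ m := by
      filter_upwards [hev] with m hm
      obtain ⟨hm1, hg2⟩ := hm
      obtain ⟨hTU, hUup, hTlow, hL1⟩ := main_nat m hm1
      set T' : ℝ := ((Tset (4 * m)).ncard : ℝ) with hT'
      set U' : ℝ := ((Uset (4 * m)).ncard : ℝ) with hU'
      set L' : ℝ := (((LFin (4 * m)).card : ℕ) : ℝ) with hL'
      set K' : ℝ := ((Kb m : ℕ) : ℝ) with hK'
      set P2 : ℝ := (2 : ℝ) ^ (4 * m ^ 2) with hP2
      have key1 : U' ≤ T' + L' * K' := by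
        rw [hT', hU', hL', hK']
        exact_mod_cast hUup
      have key2 : L' * P2 ≤ T' + L' * K' := by
        have : ((2 : ℕ) : ℝ) ^ (4 * m ^ 2) = P2 := by rw [hP2]; norm_num
        rw [hT', hL', hK', ← this]
        exact_mod_cast hTlow
      have key3 : T' ≤ U' := by rw [hT', hU']; exact_mod_cast hTU
      have key4 : (1 : ℝ) ≤ L' := by rw [hL']; exact_mod_cast hL1
      have hL0 : (0 : ℝ) < L' := lt_of_lt_of_le zero_lt_one key4
      have hP2pos : (0 : ℝ) < P2 := by rw [hP2]; positivity
      have KK : K' ≤ P2 * g m := by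
        rw [hK', hP2, hg]
        exact Kb_real_le m hm1
      have hgm0 : 0 ≤ g m := by rw [hg]; positivity
      have hKhalf : L' * K' ≤ L' * (P2 / 2) := by
        refine mul_le_mul_of_nonneg_left ?_ hL0.le
        calc K' ≤ P2 * g m := KK
          _ ≤ P2 * (1 / 2) := mul_le_mul_of_nonneg_left hg2 hP2pos.le
          _ = P2 / 2 := by ring
      have hTbig : L' * P2 / 2 ≤ T' := by
        have hhalf : L' * (P2 / 2) = L' * P2 / 2 := by ring
        linarith [key2, hKhalf]
      have hLP2pos : (0 : ℝ) < L' * P2 / 2 := by positivity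
      have hU0 : (0 : ℝ) < U' := lt_of_lt_of_le hLP2pos (hTbig.trans key3)
      constructor
      · refine mul_nonneg (by positivity) ?_
        rw [sub_nonneg]
        exact (div_le_one hU0).mpr key3
      · have hrw : (1 : ℝ) - T' / U' = (U' - T') / U' := by field_simp
        rw [hrw, mul_div_assoc']
        rw [div_le_iff₀ hU0]
        have a1 : (4 * (m : ℝ)) * (U' - T') ≤ (4 * m) * (L' * K') := by
          refine mul_le_mul_of_nonneg_left (by linarith [key1]) (by positivity)
        have a2 : (4 * (m : ℝ)) * (L' * K') ≤ (4 * m) * (L' * (P2 * g m)) := by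
          refine mul_le_mul_of_nonneg_left
            (mul_le_mul_of_nonneg_left KK hL0.le) (by positivity)
        have a3 : (4 * (m : ℝ)) * (L' * (P2 * g m)) =
            (88 * (m : ℝ) ^ 3 * (3 / 4) ^ m) * (L' * P2 / 2) := by
          rw [hg]; ring
        have a4 : (88 * (m : ℝ) ^ 3 * (3 / 4) ^ m) * (L' * P2 / 2) ≤
            (88 * (m : ℝ) ^ 3 * (3 / 4) ^ m) * U' := by
          refine mul_le_mul_of_nonneg_left (hTbig.trans key3) (by positivity)
        calc (4 * (m : ℝ)) * (U' - T') ≤ (4 * m) * (L' * K') := a1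
          _ ≤ (4 * (m : ℝ)) * (L' * (P2 * g m)) := a2
          _ = (88 * (m : ℝ) ^ 3 * (3 / 4) ^ m) * (L' * P2 / 2) := a3
          _ ≤ (88 * (m : ℝ) ^ 3 * (3 / 4) ^ m) * U' := a4
    refine squeeze_zero' (hkey.mono fun m h => h.1) (hkey.mono fun m h => h.2) hGt


/-- `T(n) ⊆ U(n)` for `4 ∣ n`, and
`α_n = 1 − |T(n)|/|U(n)|` is `o(1/n)`: the sequence
`4m · (1 − |T(4m)|/|U(4m)|)` tends to `0` as `m → ∞`. -/
theorem stmt13 :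
    (∀ n : ℕ, 4 ∣ n → Tset n ⊆ Uset n) ∧
    Filter.Tendsto
      (fun m : ℕ => (4 * m : ℝ) *
        (1 - ((Tset (4 * m)).ncard : ℝ) / ((Uset (4 * m)).ncard : ℝ)))
      Filter.atTop (nhds 0) := by
  exact stmt13'
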